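/- Phase of the U(1)_A pairing under even-odd preconditioning: let V_e and V_o be finite-dimensional complex inner product spaces and B : V_o → V_e a linear map. Define D on V_e ⊕ V_o by D(x, y) = (B y, −B* x) and Γ_ε on V_e ⊕ V_o by Γ_ε(x, y) = (x, −y). Let λ be a nonzero real number and g_e ∈ V_e a nonzero vector with B B* g_e = λ² g_e; set g = (g_e, −B* g_e), χ₊ = (D + iλ)g and χ₋ = (D − iλ)g. Then ⟨χ₋, Γ_ε χ₊⟩ / (‖χ₋‖ · ‖χ₊‖) = −(1 + iλ)/(1 − iλ) = exp(i(π + 2·arctan λ)). In particular, the phase θ defined by Γ_ε f₊ = e^{iθ} f₋ for the normalized eigenvectors f₊ = χ₊/‖χ₊‖ obtained with relative even-odd normalization η = 1 satisfies θ = π + 2·arctan λ. -/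

import Mathlib

/-!
Phase of the U(1)_A pairing under even-odd preconditioning: with
`D(x, y) = (B y, −B* x)` and `Γ_ε(x, y) = (x, −y)` on `V_e ⊕ V_o` (with the
`L²` product inner product), for the eigencomponents `χ_± = (D ± iλ)g` of the
reconstructed eigenvector `g = (g_e, −B* g_e)` one has
`⟨χ₋, Γ_ε χ₊⟩/(‖χ₋‖·‖χ₊‖) = −(1+iλ)/(1−iλ) = exp(i(π + 2 arctan λ))`, and
`Γ_ε f₊ = e^{iθ} f₋` for the normalized eigenvectors with
`θ = π + 2 arctan λ`.
-/

open scoped InnerProductSpace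

/-- Phase of the `U(1)_A` pairing under even-odd preconditioning. -/
theorem u1A_pairing_phase {Ve Vo : Type*}
    [NormedAddCommGroup Ve] [InnerProductSpace ℂ Ve] [FiniteDimensional ℂ Ve]
    [NormedAddCommGroup Vo] [InnerProductSpace ℂ Vo] [FiniteDimensional ℂ Vo]
    (B : Vo →ₗ[ℂ] Ve)
    (D Γ : WithLp 2 (Ve × Vo) → WithLp 2 (Ve × Vo))
    (hD : ∀ x : WithLp 2 (Ve × Vo),
      D x = (WithLp.equiv 2 (Ve × Vo)).symm
        (B ((WithLp.equiv 2 (Ve × Vo)) x).2,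
          -(LinearMap.adjoint B ((WithLp.equiv 2 (Ve × Vo)) x).1)))
    (hΓ : ∀ x : WithLp 2 (Ve × Vo),
      Γ x = (WithLp.equiv 2 (Ve × Vo)).symm
        (((WithLp.equiv 2 (Ve × Vo)) x).1, -((WithLp.equiv 2 (Ve × Vo)) x).2))
    (lam : ℝ) (hlam : lam ≠ 0) (g_e : Ve) (hge0 : g_e ≠ 0)
    (hge : B (LinearMap.adjoint B g_e) = ((lam : ℂ) ^ 2) • g_e)
    (g χp χm : WithLp 2 (Ve × Vo))
    (hg : g = (WithLp.equiv 2 (Ve × Vo)).symm (g_e, -(LinearMap.adjoint B g_e)))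
    (hχp : χp = D g + (Complex.I * (lam : ℂ)) • g)
    (hχm : χm = D g - (Complex.I * (lam : ℂ)) • g) :
    ⟪χm, Γ χp⟫_ℂ / ((‖χm‖ : ℂ) * (‖χp‖ : ℂ)) =
        -((1 + Complex.I * (lam : ℂ)) / (1 - Complex.I * (lam : ℂ))) ∧
      -((1 + Complex.I * (lam : ℂ)) / (1 - Complex.I * (lam : ℂ))) =
        Complex.exp (Complex.I * ((Real.pi : ℂ) + 2 * (Real.arctan lam : ℂ))) ∧
      Γ (((‖χp‖ : ℂ))⁻¹ • χp) =
        Complex.exp (Complex.I * ((Real.pi : ℂ) + 2 * (Real.arctan lam : ℂ))) •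
          (((‖χm‖ : ℂ))⁻¹ • χm) := by
  classical
  set E := WithLp.equiv 2 (Ve × Vo) with hE
  set a : Vo := LinearMap.adjoint B g_e with ha
  have hlamC : (lam : ℂ) ≠ 0 := Complex.ofReal_ne_zero.mpr hlam
  have hp0 : (1 : ℂ) + Complex.I * lam ≠ 0 := by
    intro h
    have h2 := congrArg Complex.im h
    simp at h2
    exact hlam h2
  have hm0 : (1 : ℂ) - Complex.I * lam ≠ 0 := by
    intro h
    have h2 := congrArg Complex.im h
    simp at h2
    exact hlam h2
  have hgE : E g = (g_e, -a) := by rw [hg]; exact E.apply_symm_apply _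
  have hDg : E (D g) = (-(((lam : ℂ) ^ 2) • g_e), -a) := by
    rw [hD g, hgE, E.apply_symm_apply]
    simp [hge]
    exact ha.symm
  have hχpE : E χp =
      ((Complex.I * lam * (1 + Complex.I * lam)) • g_e,
        (-(1 + Complex.I * lam)) • a) := by
    rw [hχp, (show ∀ x y : WithLp 2 (Ve × Vo), E (x + y) = E x + E y from fun _ _ => rfl), (show ∀ (c : ℂ) (x : WithLp 2 (Ve × Vo)), E (c • x) = c • E x from fun _ _ => rfl), hDg, hgE, Prod.smul_mk,
      Prod.mk_add_mk, Prod.mk.injEq]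
    refine ⟨?_, by module⟩
    match_scalars
    linear_combination (-(lam : ℂ) ^ 2) * Complex.I_sq
  have hχmE : E χm =
      ((-(Complex.I * lam) * (1 - Complex.I * lam)) • g_e,
        (-(1 - Complex.I * lam)) • a) := by
    rw [hχm, sub_eq_add_neg, ← neg_smul, (show ∀ x y : WithLp 2 (Ve × Vo), E (x + y) = E x + E y from fun _ _ => rfl), (show ∀ (c : ℂ) (x : WithLp 2 (Ve × Vo)), E (c • x) = c • E x from fun _ _ => rfl),
      hDg, hgE, Prod.smul_mk, Prod.mk_add_mk, Prod.mk.injEq]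
    refine ⟨?_, by module⟩
    match_scalars
    linear_combination (-(lam : ℂ) ^ 2) * Complex.I_sq
  have hΓχpE : E (Γ χp) =
      ((Complex.I * lam * (1 + Complex.I * lam)) • g_e,
        ((1 + Complex.I * lam)) • a) := by
    rw [hΓ χp, E.apply_symm_apply, hχpE, Prod.mk.injEq]
    exact ⟨rfl, by module⟩
  have key : ∀ x y : WithLp 2 (Ve × Vo),
      ⟪x, y⟫_ℂ = ⟪(E x).1, (E y).1⟫_ℂ + ⟪(E x).2, (E y).2⟫_ℂ := fun _ _ => rfl
  have hGe : ⟪g_e, g_e⟫_ℂ = (‖g_e‖ : ℂ) ^ 2 := inner_self_eq_norm_sq_to_K g_e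
  have hAa : ⟪a, a⟫_ℂ = (lam : ℂ) ^ 2 * (‖g_e‖ : ℂ) ^ 2 := by
    rw [ha, LinearMap.adjoint_inner_left, hge, inner_smul_right, hGe]
  set G := (‖g_e‖ : ℂ) ^ 2 with hGdef
  have hG0 : G ≠ 0 :=
    pow_ne_zero _ (Complex.ofReal_ne_zero.mpr (norm_ne_zero_iff.mpr hge0))
  have hip : ⟪χm, Γ χp⟫_ℂ = -2 * (lam : ℂ) ^ 2 * (1 + Complex.I * lam) ^ 2 * G := by
    rw [key, hχmE, hΓχpE]
    simp only [inner_smul_left, inner_smul_right, hGe, hAa, map_mul, map_neg,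
      map_sub, map_one, Complex.conj_I, Complex.conj_ofReal]
    linear_combination ((Complex.I * (lam : ℂ) + 1) ^ 2 * (lam : ℂ) ^ 2 * G) *
      Complex.I_sq
  have hipp : ⟪χp, χp⟫_ℂ = 2 * (lam : ℂ) ^ 2 * (1 + (lam : ℂ) ^ 2) * G := by
    rw [key, hχpE]
    simp only [inner_smul_left, inner_smul_right, hGe, hAa, map_mul, map_neg,
      map_add, map_one, Complex.conj_I, Complex.conj_ofReal]
    linear_combination ((Complex.I ^ 2 * (lam : ℂ) ^ 4 - (lam : ℂ) ^ 2 -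
      2 * (lam : ℂ) ^ 4) * G) * Complex.I_sq
  have hipm : ⟪χm, χm⟫_ℂ = 2 * (lam : ℂ) ^ 2 * (1 + (lam : ℂ) ^ 2) * G := by
    rw [key, hχmE]
    simp only [inner_smul_left, inner_smul_right, hGe, hAa, map_mul, map_neg,
      map_sub, map_one, Complex.conj_I, Complex.conj_ofReal]
    linear_combination ((Complex.I ^ 2 * (lam : ℂ) ^ 4 - (lam : ℂ) ^ 2 -
      2 * (lam : ℂ) ^ 4) * G) * Complex.I_sq
  have hnp : (‖χp‖ : ℂ) ^ 2 = 2 * (lam : ℂ) ^ 2 * (1 + (lam : ℂ) ^ 2) * G := by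
    rw [← hipp]; exact (inner_self_eq_norm_sq_to_K χp).symm
  have hnm : (‖χm‖ : ℂ) ^ 2 = 2 * (lam : ℂ) ^ 2 * (1 + (lam : ℂ) ^ 2) * G := by
    rw [← hipm]; exact (inner_self_eq_norm_sq_to_K χm).symm
  have hnorm_eq : ‖χm‖ = ‖χp‖ := by
    have h1 : (‖χm‖ : ℂ) ^ 2 = (‖χp‖ : ℂ) ^ 2 := by rw [hnm, hnp]
    have h2 : ‖χm‖ ^ 2 = ‖χp‖ ^ 2 := by exact_mod_cast h1
    exact (sq_eq_sq₀ (norm_nonneg _) (norm_nonneg _)).mp h2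
  have hfac : (1 : ℂ) + (lam : ℂ) ^ 2 =
      (1 - Complex.I * lam) * (1 + Complex.I * lam) := by
    linear_combination (lam : ℂ) ^ 2 * Complex.I_sq
  have hprod : (‖χm‖ : ℂ) * (‖χp‖ : ℂ) =
      2 * (lam : ℂ) ^ 2 * ((1 - Complex.I * lam) * (1 + Complex.I * lam)) * G := by
    rw [hnorm_eq, ← Complex.ofReal_mul, ← sq]
    push_cast
    rw [hnp, hfac]
  have goal1 : ⟪χm, Γ χp⟫_ℂ / ((‖χm‖ : ℂ) * (‖χp‖ : ℂ)) =
      -((1 + Complex.I * (lam : ℂ)) / (1 - Complex.I * (lam : ℂ))) := by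
    have hden : 2 * (lam : ℂ) ^ 2 * ((1 - Complex.I * lam) * (1 + Complex.I * lam)) * G ≠ 0 :=
      mul_ne_zero (mul_ne_zero (mul_ne_zero two_ne_zero (pow_ne_zero _ hlamC))
        (mul_ne_zero hm0 hp0)) hG0
    rw [hip, hprod, div_eq_iff hden]
    linear_combination (2 * (lam : ℂ) ^ 2 * (1 + Complex.I * lam) ^ 2 * G) * mul_inv_cancel₀ hm0
  -- the phase identity
  have hs : Real.sqrt (1 + lam ^ 2) ^ 2 = 1 + lam ^ 2 :=
    Real.sq_sqrt (by positivity)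
  have hs0 : Real.sqrt (1 + lam ^ 2) ≠ 0 := by positivity
  have h1l2 : (1 : ℝ) + lam ^ 2 ≠ 0 := by positivity
  have hcos : Real.cos (2 * Real.arctan lam) = (1 - lam ^ 2) / (1 + lam ^ 2) := by
    rw [Real.cos_two_mul, Real.cos_arctan, div_pow, one_pow, hs]
    field_simp
    ring
  have hsin : Real.sin (2 * Real.arctan lam) = 2 * lam / (1 + lam ^ 2) := by
    rw [Real.sin_two_mul, Real.sin_arctan, Real.cos_arctan]
    field_simp
    exact hs.symm
  have goal2 : -((1 + Complex.I * (lam : ℂ)) / (1 - Complex.I * (lam : ℂ))) =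
      Complex.exp (Complex.I * ((Real.pi : ℂ) + 2 * (Real.arctan lam : ℂ))) := by
    have h1 : Complex.I * ((Real.pi : ℂ) + 2 * (Real.arctan lam : ℂ)) =
        (Real.pi : ℂ) * Complex.I + ((2 * Real.arctan lam : ℝ) : ℂ) * Complex.I := by
      push_cast; ring
    rw [h1, Complex.exp_add, Complex.exp_pi_mul_I, Complex.exp_mul_I,
      ← Complex.ofReal_cos, ← Complex.ofReal_sin, hcos, hsin]
    have h1l2C : ((1 : ℂ) + (lam : ℂ) ^ 2) ≠ 0 := by
      rw [hfac]; exact mul_ne_zero hm0 hp0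
    push_cast
    field_simp
    linear_combination (-2 * (lam : ℂ) ^ 2) * Complex.I_sq
  refine ⟨goal1, goal2, ?_⟩
  rw [hnorm_eq, ← goal2]
  apply E.injective
  rw [hΓ, E.apply_symm_apply]
  have hsm : ∀ (z : ℂ) (v : WithLp 2 (Ve × Vo)), E (z • v) = z • E v := fun _ _ => rfl
  simp only [hsm, hχpE, hχmE, Prod.smul_mk, Prod.mk.injEq]
  have hkey1 : (-((1 + Complex.I * (lam : ℂ)) / (1 - Complex.I * (lam : ℂ)))) *
      (-(Complex.I * lam) * (1 - Complex.I * lam)) =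
      Complex.I * lam * (1 + Complex.I * lam) := by
    field_simp
  have hkey2 : (-((1 + Complex.I * (lam : ℂ)) / (1 - Complex.I * (lam : ℂ)))) *
      (-(1 - Complex.I * lam)) = 1 + Complex.I * lam := by
    field_simp
  have hu : (1 - Complex.I * (lam : ℂ)) * (1 - Complex.I * (lam : ℂ))⁻¹ = 1 :=
    mul_inv_cancel₀ hm0
  constructor
  · rw [smul_smul, smul_smul, smul_smul]
    congr 1
    linear_combination (-((‖χp‖ : ℂ))⁻¹) * hkey1
  · rw [smul_smul, smul_smul, smul_smul, ← neg_smul]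
    congr 1
    linear_combination (-((‖χp‖ : ℂ))⁻¹) * hkey2
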